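/- Let λ > 0 and -1 < b ≤ 0. Then ∫_{-1}^{0} (1 - b s)^{-λ-1} (1 + s)^{λ} ds ≤ 1/(λ+1) - b ∫_{-1}^{0} (1 - b s)^{-1} ds, and hence this integral is bounded by a constant times 1/(1+b). -/

import Mathlib

open MeasureTheory

private lemma paley_base_pos {b s : ℝ} (hb : -1 < b) (hb0 : b ≤ 0)
    (h1 : -1 ≤ s) (h2 : s ≤ 0) : (0:ℝ) < 1 - b * s := by
  nlinarith

private lemma paley_part1 (lam : ℝ) (hlam : 0 < lam) (b : ℝ) (hb : -1 < b) (hb0 : b ≤ 0) :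
    ∫ s in (-1 : ℝ)..0, (1 - b * s) ^ (-lam - 1) * (1 + s) ^ lam
      ≤ 1 / (lam + 1) - b * ∫ s in (-1 : ℝ)..0, (1 - b * s) ^ (-1 : ℝ) := by
  have hb1 : (0:ℝ) < 1 + b := by linarith
  have huicc : Set.uIcc (-1:ℝ) 0 = Set.Icc (-1:ℝ) 0 := Set.uIcc_of_le (by norm_num)
  have hlam1 : (0:ℝ) < lam + 1 := by linarith
  set u : ℝ → ℝ := fun s => (1 - b * s) ^ (-lam - 1) with hu
  set u' : ℝ → ℝ := fun s => (-b) * (-lam - 1) * (1 - b * s) ^ (-lam - 1 - 1) with hu'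
  set v : ℝ → ℝ := fun s => (1 + s) ^ (lam + 1) / (lam + 1) with hv
  set v' : ℝ → ℝ := fun s => (1 + s) ^ lam with hv'
  have hbase : ∀ x ∈ Set.uIcc (-1:ℝ) 0, (0:ℝ) < 1 - b * x := by
    intro x hx
    rw [huicc] at hx
    exact paley_base_pos hb hb0 hx.1 hx.2
  have hdu : ∀ x ∈ Set.uIcc (-1:ℝ) 0, HasDerivAt u (u' x) x := by
    intro x hx
    have h1 : HasDerivAt (fun s : ℝ => 1 - b * s) (-b) x := by
      simpa using ((hasDerivAt_id x).const_mul b).const_sub 1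
    exact h1.rpow_const (Or.inl (ne_of_gt (hbase x hx)))
  have hdv : ∀ x ∈ Set.uIcc (-1:ℝ) 0, HasDerivAt v (v' x) x := by
    intro x hx
    have h1 : HasDerivAt (fun s : ℝ => 1 + s) 1 x := by
      simpa using (hasDerivAt_id x).const_add 1
    have h2 := (h1.rpow_const (Or.inr (by linarith : (1:ℝ) ≤ lam + 1))).div_const (lam + 1)
    refine h2.congr_deriv ?_
    have : lam + 1 - 1 = lam := by ring
    rw [this]
    field_simp
    rfl
  have hcu' : IntervalIntegrable u' volume (-1) 0 := by
    apply ContinuousOn.intervalIntegrable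
    apply ContinuousOn.mul continuousOn_const
    exact (continuousOn_const.sub ((continuous_mul_left b).continuousOn)).rpow_const
      (fun x hx => Or.inl (ne_of_gt (hbase x hx)))
  have hcv' : IntervalIntegrable v' volume (-1) 0 := by
    apply ContinuousOn.intervalIntegrable
    exact (continuousOn_const.add continuousOn_id).rpow_const
      (fun x hx => Or.inr (le_of_lt hlam))
  have hIBP := intervalIntegral.integral_mul_deriv_eq_deriv_mul hdu hdv hcu' hcv'
  have hmain : ∫ x in (-1:ℝ)..0, u x * v' x
      = 1 / (lam + 1) - b * ∫ x in (-1:ℝ)..0,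
          (1 - b * x) ^ (-lam - 1 - 1) * (1 + x) ^ (lam + 1) := by
    rw [hIBP]
    have hb0' : u 0 * v 0 = 1 / (lam + 1) := by
      simp [hu, hv, Real.one_rpow]
    have hbm1 : u (-1) * v (-1) = 0 := by
      simp [hu, hv, Real.zero_rpow (by linarith : lam + 1 ≠ 0)]
    have hint : ∀ x : ℝ, u' x * v x
        = b * ((1 - b * x) ^ (-lam - 1 - 1) * (1 + x) ^ (lam + 1)) := by
      intro x
      simp only [hu', hv]
      field_simp
      ring
    rw [hb0', hbm1]
    simp_rw [hint]
    rw [intervalIntegral.integral_const_mul]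
    ring
  rw [hmain]
  -- now compare the two integrals
  have hI2leI3 : (∫ x in (-1:ℝ)..0, (1 - b * x) ^ (-lam - 1 - 1) * (1 + x) ^ (lam + 1))
      ≤ ∫ x in (-1:ℝ)..0, (1 - b * x) ^ (-1 : ℝ) := by
    apply intervalIntegral.integral_mono_on (by norm_num)
    · apply ContinuousOn.intervalIntegrable
      apply ContinuousOn.mul
      · exact (continuousOn_const.sub ((continuous_mul_left b).continuousOn)).rpow_const
          (fun x hx => Or.inl (ne_of_gt (hbase x hx)))
      · exact (continuousOn_const.add continuousOn_id).rpow_const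
          (fun x hx => Or.inr (by linarith))
    · apply ContinuousOn.intervalIntegrable
      exact (continuousOn_const.sub ((continuous_mul_left b).continuousOn)).rpow_const
        (fun x hx => Or.inl (ne_of_gt (hbase x hx)))
    · intro x hx
      have hpos : (0:ℝ) < 1 - b * x := paley_base_pos hb hb0 hx.1 hx.2
      have h1x : (0:ℝ) ≤ 1 + x := by linarith [hx.1]
      have hle : 1 + x ≤ 1 - b * x := by nlinarith [hx.2]
      have h2 : (1 + x) ^ (lam + 1) ≤ (1 - b * x) ^ (lam + 1) :=
        Real.rpow_le_rpow h1x hle (by linarith)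
      calc (1 - b * x) ^ (-lam - 1 - 1) * (1 + x) ^ (lam + 1)
          ≤ (1 - b * x) ^ (-lam - 1 - 1) * (1 - b * x) ^ (lam + 1) :=
            mul_le_mul_of_nonneg_left h2 (Real.rpow_nonneg (le_of_lt hpos) _)
        _ = (1 - b * x) ^ (-1 : ℝ) := by
            rw [← Real.rpow_add hpos]; congr 1; ring
  nlinarith [mul_le_mul_of_nonneg_left hI2leI3 (by linarith : (0:ℝ) ≤ -b)]

theorem paley_stmt4 (lam : ℝ) (hlam : 0 < lam) :
    (∀ b : ℝ, -1 < b → b ≤ 0 →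
      ∫ s in (-1 : ℝ)..0, (1 - b * s) ^ (-lam - 1) * (1 + s) ^ lam
        ≤ 1 / (lam + 1) - b * ∫ s in (-1 : ℝ)..0, (1 - b * s) ^ (-1 : ℝ)) ∧
    ∃ C > (0 : ℝ), ∀ b : ℝ, -1 < b → b ≤ 0 →
      ∫ s in (-1 : ℝ)..0, (1 - b * s) ^ (-lam - 1) * (1 + s) ^ lam ≤ C / (1 + b) := by
  constructor
  · exact fun b hb hb0 => paley_part1 lam hlam b hb hb0
  · refine ⟨1 / (lam + 1) + 1, by positivity, fun b hb hb0 => ?_⟩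
    have hb1 : (0:ℝ) < 1 + b := by linarith
    have h1 := paley_part1 lam hlam b hb hb0
    set I3 := ∫ s in (-1 : ℝ)..0, (1 - b * s) ^ (-1 : ℝ) with hI3
    have hI3nn : 0 ≤ I3 := by
      apply intervalIntegral.integral_nonneg (by norm_num)
      intro x hx
      exact Real.rpow_nonneg (le_of_lt (paley_base_pos hb hb0 hx.1 hx.2)) _
    have hI3le : I3 ≤ (1 + b)⁻¹ := by
      have := intervalIntegral.integral_mono_on (μ := volume) (by norm_num : (-1:ℝ) ≤ 0)
        (f := fun x => (1 - b * x) ^ (-1 : ℝ)) (g := fun _ => (1 + b)⁻¹)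
        ?_ (intervalIntegrable_const) ?_
      · simpa using this
      · apply ContinuousOn.intervalIntegrable
        apply ContinuousOn.rpow_const
          (continuousOn_const.sub ((continuous_mul_left b).continuousOn))
        intro x hx
        rw [Set.uIcc_of_le (by norm_num : (-1:ℝ) ≤ 0)] at hx
        exact Or.inl (ne_of_gt (paley_base_pos hb hb0 hx.1 hx.2))
      · intro x hx
        have hpos := paley_base_pos hb hb0 hx.1 hx.2
        show (1 - b * x) ^ (-1 : ℝ) ≤ (1 + b)⁻¹
        rw [Real.rpow_neg_one]
        apply inv_anti₀ hb1
        nlinarith [hx.1]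
    have key : -(b * I3) ≤ (1 + b)⁻¹ := by
      have hnb : 0 ≤ -b := by linarith
      have hnb1 : -b ≤ 1 := by linarith
      calc -(b * I3) = (-b) * I3 := by ring
        _ ≤ 1 * (1 + b)⁻¹ := mul_le_mul hnb1 hI3le hI3nn (by norm_num)
        _ = (1 + b)⁻¹ := one_mul _
    have hfin : 1 / (lam + 1) + (1 + b)⁻¹ ≤ (1 / (lam + 1) + 1) / (1 + b) := by
      have hA : (0:ℝ) < 1 / (lam + 1) := by positivity
      rw [le_div_iff₀ hb1]
      have hinv : (1 + b)⁻¹ * (1 + b) = 1 := inv_mul_cancel₀ (ne_of_gt hb1)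
      nlinarith [mul_nonneg (le_of_lt hA) (neg_nonneg.2 hb0)]
    linarith
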